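/- For every positive integer m, (4^m/√(πm))·(1 - 1/(4m)) < C(2m, m) < 4^m/√(πm). -/

import Mathlib

open Real Filter Topology

noncomputable def Pc (m : ℕ) : ℝ := (Nat.centralBinom m : ℝ) / 4 ^ m
lemma Pc_pos (m : ℕ) : 0 < Pc m := by
  have := Nat.centralBinom_pos m
  unfold Pc; positivity
lemma Pc_succ (m : ℕ) : Pc (m + 1) = Pc m * (2 * m + 1) / (2 * m + 2) := by
  have h := Nat.succ_mul_centralBinom_succ m
  have h' : ((m : ℝ) + 1) * Nat.centralBinom (m + 1) = 2 * (2 * m + 1) * Nat.centralBinom m := by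
    exact_mod_cast congrArg (Nat.cast : ℕ → ℝ) h
  unfold Pc
  rw [pow_succ]
  rw [div_mul_eq_mul_div, div_div, div_eq_div_iff (by positivity) (by positivity)]
  linear_combination 2 * (4:ℝ) ^ m * h'
noncomputable def fc (m : ℕ) : ℝ := m * Pc m ^ 2
noncomputable def gc (m : ℕ) : ℝ := fc m * (4 * m / (4 * m - 1)) ^ 2

lemma fc_succ_eq (m : ℕ) :
    fc (m + 1) = ((m : ℝ) + 1) * (2 * m + 1) ^ 2 * Pc m ^ 2 / (2 * m + 2) ^ 2 := by
  unfold fc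
  rw [Pc_succ]
  push_cast
  have : (0:ℝ) < 2 * m + 2 := by positivity
  field_simp

lemma fc_lt_succ {m : ℕ} (hm : 1 ≤ m) : fc m < fc (m + 1) := by
  have hm' : (1:ℝ) ≤ m := by exact_mod_cast hm
  have hx : 0 < Pc m ^ 2 := pow_pos (Pc_pos m) 2
  rw [fc_succ_eq]
  rw [lt_div_iff₀ (by positivity)]
  unfold fc
  nlinarith [mul_pos hx (by nlinarith : (0:ℝ) < (2*m+1)^2 - 4*m*(m+1))]

lemma fc_mono : Monotone fc := by
  apply monotone_nat_of_le_succ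
  intro n
  cases n with
  | zero =>
    have : fc 0 = 0 := by unfold fc; simp
    rw [this]; unfold fc; positivity
  | succ k => exact (fc_lt_succ (Nat.le_add_left 1 k)).le

lemma gc_succ_lt {m : ℕ} (hm : 1 ≤ m) : gc (m + 1) < gc m := by
  have hm' : (1:ℝ) ≤ m := by exact_mod_cast hm
  have hx : 0 < Pc m ^ 2 := pow_pos (Pc_pos m) 2
  have key : ((m:ℝ) + 1) * (2*m+1)^2 * (4*m-1)^2 < 4 * m^3 * (4*m+3)^2 := by nlinarith
  have e1 : gc (m + 1) =
      (((m:ℝ)+1) * (2*m+1)^2 * (4*m+4)^2 * Pc m ^ 2) / ((2*m+2)^2 * (4*m+3)^2) := by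
    unfold gc
    rw [fc_succ_eq]
    push_cast
    have h1 : (0:ℝ) < 2*m+2 := by positivity
    have h2 : (0:ℝ) < 4*m+3 := by positivity
    have h3 : (4:ℝ)*(m+1) - 1 = 4*m+3 := by ring
    rw [h3]
    field_simp
  have e2 : gc m = ((m:ℝ) * (4*m)^2 * Pc m ^ 2) / ((4*m-1)^2) := by
    unfold gc fc
    have h1 : (0:ℝ) < 4*m-1 := by linarith
    field_simp
  rw [e1, e2, div_lt_div_iff₀ (by positivity) (by nlinarith)]
  nlinarith [mul_lt_mul_of_pos_right key (by positivity : (0:ℝ) < 16*(m+1)^2 * Pc m ^ 2)]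

lemma gc_anti : ∀ a b : ℕ, 1 ≤ a → a ≤ b → gc b ≤ gc a := by
  intro a b ha hab
  induction b with
  | zero => omega
  | succ n ih =>
    rcases Nat.lt_or_ge a (n+1) with h | h
    · have han : a ≤ n := by omega
      exact le_trans (gc_succ_lt (by omega)).le (ih han)
    · have : a = n + 1 := by omega
      rw [this]

lemma cb_fac (n : ℕ) : ((2 * n).factorial : ℝ) = Nat.centralBinom n * n.factorial ^ 2 := by
  have h := Nat.choose_mul_factorial_mul_factorial (Nat.le_mul_of_pos_left n (by norm_num : 0 < 2))
  rw [Nat.centralBinom_eq_two_mul_choose]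
  have h2 : 2 * n - n = n := by omega
  rw [h2] at h
  have := congrArg (Nat.cast : ℕ → ℝ) h
  push_cast at this
  linarith [this]

lemma fc_eq (n : ℕ) : fc n = n / ((2 * n + 1) * Real.Wallis.W n) := by
  have hW := Real.Wallis.W_eq_factorial_ratio n
  have hcb := cb_fac n
  have hfac : (0:ℝ) < n.factorial := by exact_mod_cast n.factorial_pos
  have hcbp : (0:ℝ) < Nat.centralBinom n := by exact_mod_cast Nat.centralBinom_pos n
  unfold fc Pc
  rw [hW, hcb]
  have h16 : (2:ℝ) ^ (4 * n) = 16 ^ n := by rw [pow_mul]; norm_num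
  rw [h16]
  have h4 : ((4:ℝ) ^ n) ^ 2 = 16 ^ n := by rw [← pow_mul, pow_mul']; norm_num
  field_simp
  ring_nf
  rw [pow_mul, h4]

lemma tendsto_half : Tendsto (fun n : ℕ => (n:ℝ) / (2 * n + 1)) atTop (𝓝 (1/2)) := by
  have h : Tendsto (fun n : ℕ => 1 / (2 + 1 / (n:ℝ))) atTop (𝓝 (1/2)) := by
    have h2 : Tendsto (fun n : ℕ => 2 + 1 / (n:ℝ)) atTop (𝓝 (2 + 0)) :=
      tendsto_const_nhds.add tendsto_one_div_atTop_nhds_zero_nat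
    rw [add_zero] at h2
    exact tendsto_const_nhds.div h2 (by norm_num)
  apply h.congr'
  filter_upwards [eventually_ge_atTop 1] with n hn
  have hn' : (0:ℝ) < n := by exact_mod_cast hn
  field_simp

lemma tendsto_fc : Tendsto fc atTop (𝓝 (1 / π)) := by
  have hW : Tendsto (fun n => (Real.Wallis.W n)⁻¹) atTop (𝓝 ((π/2)⁻¹)) :=
    Real.Wallis.tendsto_W_nhds_pi_div_two.inv₀ (by positivity)
  have h := tendsto_half.mul hW
  have heq : (fun n : ℕ => (n:ℝ) / (2 * n + 1) * (Real.Wallis.W n)⁻¹) = fc := by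
    funext n
    have hWp := (Real.Wallis.W_pos n).ne'
    have h2n : (2*(n:ℝ)+1) ≠ 0 := by positivity
    rw [fc_eq]
    field_simp
  rw [heq] at h
  convert h using 2
  rw [inv_div]
  ring

lemma tendsto_gc : Tendsto gc atTop (𝓝 (1 / π)) := by
  have h1 : Tendsto (fun n : ℕ => ((4 * n : ℝ) / (4 * n - 1)) ^ 2) atTop (𝓝 1) := by
    have h2 : Tendsto (fun n : ℕ => 1 / (1 - (1/4) * (1 / (n:ℝ)))) atTop (𝓝 1) := by
      have h3 : Tendsto (fun n : ℕ => 1 - (1/4) * (1 / (n:ℝ))) atTop (𝓝 (1 - (1/4) * 0)) :=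
        tendsto_const_nhds.sub (tendsto_one_div_atTop_nhds_zero_nat.const_mul (1/4))
      rw [mul_zero, sub_zero] at h3
      have h4 := (tendsto_const_nhds : Tendsto (fun _ : ℕ => (1:ℝ)) atTop (𝓝 1)).div h3 (by norm_num : (1:ℝ) ≠ 0)
      rw [show (1:ℝ)/1 = 1 by norm_num] at h4
      exact h4
    have h4 : Tendsto (fun n : ℕ => (4 * (n:ℝ)) / (4 * n - 1)) atTop (𝓝 1) := by
      apply h2.congr'
      filter_upwards [eventually_ge_atTop 1] with n hn
      have hn' : (1:ℝ) ≤ n := by exact_mod_cast hn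
      have : (0:ℝ) < 4 * n - 1 := by linarith
      field_simp
    simpa using h4.pow 2
  have := tendsto_fc.mul h1
  rw [mul_one] at this
  exact this

lemma fc_lt_pi_inv {m : ℕ} (hm : 1 ≤ m) : fc m < 1 / π := by
  have h1 : fc (m + 1) ≤ 1 / π := fc_mono.ge_of_tendsto tendsto_fc (m + 1)
  exact lt_of_lt_of_le (fc_lt_succ hm) h1

lemma pi_inv_lt_gc {m : ℕ} (hm : 1 ≤ m) : 1 / π < gc m := by
  have h1 : 1 / π ≤ gc (m + 1) := by
    apply le_of_tendsto tendsto_gc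
    filter_upwards [eventually_ge_atTop (m + 1)] with k hk
    exact gc_anti (m + 1) k (by omega) hk
  exact lt_of_le_of_lt h1 (gc_succ_lt hm)

theorem central_binom_bounds (m : ℕ) (hm : 1 ≤ m) :
    (4 ^ m / Real.sqrt (Real.pi * m)) * (1 - 1 / (4 * m)) <
        (Nat.choose (2 * m) m : ℝ) ∧
      (Nat.choose (2 * m) m : ℝ) < 4 ^ m / Real.sqrt (Real.pi * m) := by
  have hm' : (1:ℝ) ≤ m := by exact_mod_cast hm
  have hπ := Real.pi_pos
  have hπm : (0:ℝ) < π * m := by positivity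
  have hs : (0:ℝ) < Real.sqrt (π * m) := Real.sqrt_pos.mpr hπm
  have hs2 : Real.sqrt (π * m) ^ 2 = π * m := Real.sq_sqrt hπm.le
  have hcb : (Nat.choose (2 * m) m : ℝ) = Pc m * 4 ^ m := by
    unfold Pc
    rw [Nat.centralBinom_eq_two_mul_choose]
    field_simp
  have hP := Pc_pos m
  have h4 : (0:ℝ) < 4 ^ m := by positivity
  constructor
  · -- lower bound
    have hg := pi_inv_lt_gc hm
    unfold gc fc at hg
    have hd : (0:ℝ) < 4 * m - 1 := by linarith
    have ht : (1:ℝ) - 1 / (4 * m) = (4 * m - 1) / (4 * m) := by field_simp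
    rw [hcb, ht, div_mul_eq_mul_div, div_lt_iff₀ hs]
    have hkey : ((4:ℝ) * m - 1) ^ 2 / (4 * m) ^ 2 < π * m * Pc m ^ 2 := by
      rw [div_lt_iff₀ (by positivity)]
      have h2 : (0:ℝ) < (4 * m - 1) ^ 2 := by positivity
      have h3 := mul_lt_mul_of_pos_right hg h2
      rw [div_pow, one_div] at h3
      field_simp at h3
      nlinarith [h3]
    have hsq : (4 ^ m * ((4 * m - 1) / (4 * m))) ^ 2 < (Pc m * 4 ^ m * Real.sqrt (π * m)) ^ 2 := by
      have e1 : (4 ^ m * ((4 * m - 1) / (4 * m))) ^ 2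
          = ((4:ℝ) ^ m) ^ 2 * ((4 * m - 1) ^ 2 / (4 * m) ^ 2) := by
        rw [mul_pow, div_pow]
      have e2 : (Pc m * 4 ^ m * Real.sqrt (π * m)) ^ 2
          = π * m * Pc m ^ 2 * ((4:ℝ) ^ m) ^ 2 := by
        rw [mul_pow, mul_pow, hs2]; ring
      rw [e1, e2]
      nlinarith [mul_lt_mul_of_pos_right hkey (pow_pos h4 2)]
    have hLpos : (0:ℝ) ≤ 4 ^ m * ((4 * m - 1) / (4 * m)) := by positivity
    calc 4 ^ m * ((4 * m - 1) / (4 * m))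
        < Pc m * 4 ^ m * Real.sqrt (π * m) :=
          lt_of_pow_lt_pow_left₀ 2 (by positivity) hsq
      _ = _ := by ring
  · -- upper bound
    have hf := fc_lt_pi_inv hm
    unfold fc at hf
    rw [hcb, lt_div_iff₀ hs]
    have hsq : (Pc m * 4 ^ m * Real.sqrt (π * m)) ^ 2 < ((4:ℝ) ^ m) ^ 2 := by
      have : (Pc m * 4 ^ m * Real.sqrt (π * m)) ^ 2
          = Pc m ^ 2 * ((4:ℝ) ^ m) ^ 2 * (π * m) := by
        rw [mul_pow, mul_pow, hs2]
      rw [this]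
      have h1 : π * (m * Pc m ^ 2) < 1 := by
        rw [one_div] at hf
        calc π * (m * Pc m ^ 2) < π * π⁻¹ := by
              exact mul_lt_mul_of_pos_left hf hπ
          _ = 1 := mul_inv_cancel₀ hπ.ne'
      nlinarith [sq_nonneg ((4:ℝ)^m), pow_pos h4 2]
    exact lt_of_pow_lt_pow_left₀ 2 h4.le hsq
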